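/- Fix a₁, a₂ ∈ ℝ and define the polynomial truncations u₀(r) = 1 + a₁r² + ((2/5)a₁³ + (2/5)a₁a₂² + (3/10)a₁²)r⁴, v₀(r) = 1 + a₂r² + ((2/5)a₂a₁² + (2/5)a₂³ + (3/10)a₂²)r⁴, and m₀(r) = (a₁² + a₂²)r³ + ((4/5)a₁³ + (4/5)a₂³)r⁵, with N₀ = 1 − 2m₀/r and Q₀ = (1−u₀²)² + (1−v₀²)². Then as r → 0⁺ the residuals of the reduced SO(5) EYM system vanish to the stated orders: r²N₀u₀'' + (2m₀ − Q₀/(2r))u₀' + u₀(1−u₀²) = O(r⁶), r²N₀v₀'' + (2m₀ − Q₀/(2r))v₀' + v₀(1−v₀²) = O(r⁶), and m₀' − [(N₀/2)((u₀')² + (v₀')²) + Q₀/(4r²)] = O(r⁶). Thus these truncations are the formal power-series solutions of the reduced system near r = 0 through the displayed orders, parametrized by (a₁, a₂). -/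

import Mathlib

open Set Asymptotics

set_option maxHeartbeats 1000000 in
private lemma aux_res_bigO (C0 C2 C4 C6 C8 C10 C12 : ℝ) :
    (fun r : ℝ => r ^ 6 * (C0 + C2*r^2 + C4*r^4 + C6*r^6 + C8*r^8 + C10*r^10 + C12*r^12))
      =O[nhdsWithin (0:ℝ) (Ioi 0)] (fun r : ℝ => r ^ 6) := by
  have hcont : Continuous fun r : ℝ =>
      C0 + C2*r^2 + C4*r^4 + C6*r^6 + C8*r^8 + C10*r^10 + C12*r^12 := by fun_prop
  have h1 := ((hcont.tendsto 0).mono_left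
    (nhdsWithin_le_nhds (s := Ioi (0:ℝ)))).isBigO_one ℝ
  simpa using (isBigO_refl (fun r : ℝ => r ^ 6) (nhdsWithin (0:ℝ) (Ioi 0))).mul h1

/-- The polynomial truncations of the formal power-series solutions of the
reduced SO(5) EYM system near `r = 0`, parametrized by the shooting parameters
`(a₁, a₂)`, satisfy the reduced equations up to residuals of order `O(r⁶)` as
`r → 0⁺`. -/
theorem formal_series_residuals (a₁ a₂ : ℝ)
    (u₀ v₀ m₀ N₀ Q₀ : ℝ → ℝ)
    (hu₀ : u₀ = fun r =>
      1 + a₁ * r ^ 2 + (2 / 5 * a₁ ^ 3 + 2 / 5 * a₁ * a₂ ^ 2 + 3 / 10 * a₁ ^ 2) * r ^ 4)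
    (hv₀ : v₀ = fun r =>
      1 + a₂ * r ^ 2 + (2 / 5 * a₂ * a₁ ^ 2 + 2 / 5 * a₂ ^ 3 + 3 / 10 * a₂ ^ 2) * r ^ 4)
    (hm₀ : m₀ = fun r =>
      (a₁ ^ 2 + a₂ ^ 2) * r ^ 3 + (4 / 5 * a₁ ^ 3 + 4 / 5 * a₂ ^ 3) * r ^ 5)
    (hN₀ : N₀ = fun r => 1 - 2 * m₀ r / r)
    (hQ₀ : Q₀ = fun r => (1 - u₀ r ^ 2) ^ 2 + (1 - v₀ r ^ 2) ^ 2) :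
    (fun r => r ^ 2 * N₀ r * deriv (deriv u₀) r
        + (2 * m₀ r - Q₀ r / (2 * r)) * deriv u₀ r
        + u₀ r * (1 - u₀ r ^ 2)) =O[nhdsWithin 0 (Ioi 0)] (fun r => r ^ 6) ∧
    (fun r => r ^ 2 * N₀ r * deriv (deriv v₀) r
        + (2 * m₀ r - Q₀ r / (2 * r)) * deriv v₀ r
        + v₀ r * (1 - v₀ r ^ 2)) =O[nhdsWithin 0 (Ioi 0)] (fun r => r ^ 6) ∧
    (fun r => deriv m₀ r
        - ((N₀ r) / 2 * ((deriv u₀ r) ^ 2 + (deriv v₀ r) ^ 2)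
          + Q₀ r / (4 * r ^ 2))) =O[nhdsWithin 0 (Ioi 0)] (fun r => r ^ 6) := by
  subst hu₀ hv₀ hm₀ hN₀ hQ₀
  obtain ⟨b₁, hb₁⟩ : ∃ b : ℝ, b = 2 / 5 * a₁ ^ 3 + 2 / 5 * a₁ * a₂ ^ 2 + 3 / 10 * a₁ ^ 2 := ⟨_, rfl⟩
  obtain ⟨b₂, hb₂⟩ : ∃ b : ℝ, b = 2 / 5 * a₂ * a₁ ^ 2 + 2 / 5 * a₂ ^ 3 + 3 / 10 * a₂ ^ 2 := ⟨_, rfl⟩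
  rw [← hb₁, ← hb₂]
  have hdu : deriv (fun r => 1 + a₁ * r ^ 2 + b₁ * r ^ 4)
      = fun r : ℝ => 2 * a₁ * r + 4 * b₁ * r ^ 3 := by
    funext r
    have h := (((hasDerivAt_pow 2 r).const_mul a₁).const_add 1).add
      ((hasDerivAt_pow 4 r).const_mul b₁)
    have h2 : HasDerivAt (fun r : ℝ => 1 + a₁ * r ^ 2 + b₁ * r ^ 4)
        (2 * a₁ * r + 4 * b₁ * r ^ 3) r := by
      convert h using 1
      · rfl
      · rfl
      · rfl
      push_cast; ring
    exact h2.deriv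
  have hddu : deriv (fun r : ℝ => 2 * a₁ * r + 4 * b₁ * r ^ 3)
      = fun r : ℝ => 2 * a₁ + 12 * b₁ * r ^ 2 := by
    funext r
    have h := ((hasDerivAt_pow 1 r).const_mul (2 * a₁)).add
      ((hasDerivAt_pow 3 r).const_mul (4 * b₁))
    have h2 : HasDerivAt (fun r : ℝ => 2 * a₁ * r + 4 * b₁ * r ^ 3)
        (2 * a₁ + 12 * b₁ * r ^ 2) r := by
      convert h using 1
      · rfl
      · rfl
      · funext x; simp only [Pi.add_apply]; push_cast; ring
      · push_cast; ring
    exact h2.deriv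
  have hdv : deriv (fun r => 1 + a₂ * r ^ 2 + b₂ * r ^ 4)
      = fun r : ℝ => 2 * a₂ * r + 4 * b₂ * r ^ 3 := by
    funext r
    have h := (((hasDerivAt_pow 2 r).const_mul a₂).const_add 1).add
      ((hasDerivAt_pow 4 r).const_mul b₂)
    have h2 : HasDerivAt (fun r : ℝ => 1 + a₂ * r ^ 2 + b₂ * r ^ 4)
        (2 * a₂ * r + 4 * b₂ * r ^ 3) r := by
      convert h using 1
      · rfl
      · rfl
      · rfl
      push_cast; ring
    exact h2.deriv
  have hddv : deriv (fun r : ℝ => 2 * a₂ * r + 4 * b₂ * r ^ 3)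
      = fun r : ℝ => 2 * a₂ + 12 * b₂ * r ^ 2 := by
    funext r
    have h := ((hasDerivAt_pow 1 r).const_mul (2 * a₂)).add
      ((hasDerivAt_pow 3 r).const_mul (4 * b₂))
    have h2 : HasDerivAt (fun r : ℝ => 2 * a₂ * r + 4 * b₂ * r ^ 3)
        (2 * a₂ + 12 * b₂ * r ^ 2) r := by
      convert h using 1
      · rfl
      · rfl
      · funext x; simp only [Pi.add_apply]; push_cast; ring
      · push_cast; ring
    exact h2.deriv
  have hdm : deriv (fun r => (a₁ ^ 2 + a₂ ^ 2) * r ^ 3 + (4 / 5 * a₁ ^ 3 + 4 / 5 * a₂ ^ 3) * r ^ 5)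
      = fun r : ℝ => 3 * (a₁ ^ 2 + a₂ ^ 2) * r ^ 2 + 5 * (4 / 5 * a₁ ^ 3 + 4 / 5 * a₂ ^ 3) * r ^ 4 := by
    funext r
    have h := ((hasDerivAt_pow 3 r).const_mul (a₁ ^ 2 + a₂ ^ 2)).add
      ((hasDerivAt_pow 5 r).const_mul (4 / 5 * a₁ ^ 3 + 4 / 5 * a₂ ^ 3))
    have h2 : HasDerivAt (fun r : ℝ => (a₁ ^ 2 + a₂ ^ 2) * r ^ 3 + (4 / 5 * a₁ ^ 3 + 4 / 5 * a₂ ^ 3) * r ^ 5)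
        (3 * (a₁ ^ 2 + a₂ ^ 2) * r ^ 2 + 5 * (4 / 5 * a₁ ^ 3 + 4 / 5 * a₂ ^ 3) * r ^ 4) r := by
      convert h using 1
      · rfl
      · rfl
      · rfl
      push_cast; ring
    exact h2.deriv
  have hmem : ∀ᶠ r in nhdsWithin (0:ℝ) (Ioi 0), r ∈ Ioi (0:ℝ) := self_mem_nhdsWithin
  refine ⟨?_, ?_, ?_⟩
  · refine IsBigO.congr' (aux_res_bigO ((-24)*a₂^2*b₁ + (-6)*a₁*b₁ + (-8)*a₁*a₂*b₂ + (-4)*a₁*a₂^3 + (-32)*a₁^2*b₁ + (-1)*a₁^3 + (-4)*a₁^4)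
      ((-3)*b₁^2 + (-16)*a₂*b₁*b₂ + (-104/5)*a₂^3*b₁ + (-4)*a₁*b₂^2 + (-20)*a₁*b₁^2 + (-12)*a₁*a₂^2*b₂ + (-1)*a₁*a₂^4 + (-3)*a₁^2*b₁ + (-164/5)*a₁^3*b₁ + (-1)*a₁^5)
      ((-8)*b₁*b₂^2 + (-8)*b₁^3 + (-24)*a₂^2*b₁*b₂ + (-2)*a₂^4*b₁ + (-3)*a₁*b₁^2 + (-12)*a₁*a₂*b₂^2 + (-4)*a₁*a₂^3*b₂ + (-36)*a₁^2*b₁^2 + (-6)*a₁^4*b₁)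
      ((-1)*b₁^3 + (-24)*a₂*b₁*b₂^2 + (-8)*a₂^3*b₁*b₂ + (-4)*a₁*b₂^3 + (-28)*a₁*b₁^3 + (-6)*a₁*a₂^2*b₂^2 + (-14)*a₁^3*b₁^2)
      ((-8)*b₁*b₂^3 + (-8)*b₁^4 + (-12)*a₂^2*b₁*b₂^2 + (-4)*a₁*a₂*b₂^3 + (-16)*a₁^2*b₁^3)
      ((-8)*a₂*b₁*b₂^3 + (-1)*a₁*b₂^4 + (-9)*a₁*b₁^4)
      ((-2)*b₁*b₂^4 + (-2)*b₁^5)) ?_ (Filter.EventuallyEq.refl _ _)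
    filter_upwards [hmem] with r hr
    symm
    rw [hdu, hddu]
    beta_reduce
    have hr' : r ≠ 0 := ne_of_gt hr
    rw [show 2 * ((a₁ ^ 2 + a₂ ^ 2) * r ^ 3 + (4 / 5 * a₁ ^ 3 + 4 / 5 * a₂ ^ 3) * r ^ 5) / r
        = 2 * ((a₁ ^ 2 + a₂ ^ 2) * r ^ 2 + (4 / 5 * a₁ ^ 3 + 4 / 5 * a₂ ^ 3) * r ^ 4) from by
      rw [div_eq_iff hr']; ring]
    rw [show ((1 - (1 + a₁ * r ^ 2 + b₁ * r ^ 4) ^ 2) ^ 2 + (1 - (1 + a₂ * r ^ 2 + b₂ * r ^ 4) ^ 2) ^ 2) / (2 * r)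
        = r^3 * (((2)*a₂^2 + (2)*a₁^2) + ((4)*a₂*b₂ + (2)*a₂^3 + (4)*a₁*b₁ + (2)*a₁^3) * r^2 + ((2)*b₂^2 + (2)*b₁^2 + (6)*a₂^2*b₂ + (1/2)*a₂^4 + (6)*a₁^2*b₁ + (1/2)*a₁^4) * r^4 + ((6)*a₂*b₂^2 + (2)*a₂^3*b₂ + (6)*a₁*b₁^2 + (2)*a₁^3*b₁) * r^6 + ((2)*b₂^3 + (2)*b₁^3 + (3)*a₂^2*b₂^2 + (3)*a₁^2*b₁^2) * r^8 + ((2)*a₂*b₂^3 + (2)*a₁*b₁^3) * r^10 + ((1/2)*b₂^4 + (1/2)*b₁^4) * r^12) from by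
      rw [div_eq_iff (by simp [hr'] : (2:ℝ) * r ≠ 0)]; ring]
    have hC : ((10)*b₁ + (-4)*a₁*a₂^2 + (-3)*a₁^2 + (-4)*a₁^3) = 0 := by simp only [hb₁, hb₂]; ring
    linear_combination r ^ 4 * hC
  · refine IsBigO.congr' (aux_res_bigO ((-6)*a₂*b₂ + (-32)*a₂^2*b₂ + (-1)*a₂^3 + (-4)*a₂^4 + (-8)*a₁*a₂*b₁ + (-24)*a₁^2*b₂ + (-4)*a₁^3*a₂)
      ((-3)*b₂^2 + (-20)*a₂*b₂^2 + (-4)*a₂*b₁^2 + (-3)*a₂^2*b₂ + (-164/5)*a₂^3*b₂ + (-1)*a₂^5 + (-16)*a₁*b₁*b₂ + (-12)*a₁^2*a₂*b₁ + (-104/5)*a₁^3*b₂ + (-1)*a₁^4*a₂)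
      ((-8)*b₂^3 + (-8)*b₁^2*b₂ + (-3)*a₂*b₂^2 + (-36)*a₂^2*b₂^2 + (-6)*a₂^4*b₂ + (-12)*a₁*a₂*b₁^2 + (-24)*a₁^2*b₁*b₂ + (-4)*a₁^3*a₂*b₁ + (-2)*a₁^4*b₂)
      ((-1)*b₂^3 + (-28)*a₂*b₂^3 + (-4)*a₂*b₁^3 + (-14)*a₂^3*b₂^2 + (-24)*a₁*b₁^2*b₂ + (-6)*a₁^2*a₂*b₁^2 + (-8)*a₁^3*b₁*b₂)
      ((-8)*b₂^4 + (-8)*b₁^3*b₂ + (-16)*a₂^2*b₂^3 + (-4)*a₁*a₂*b₁^3 + (-12)*a₁^2*b₁^2*b₂)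
      ((-9)*a₂*b₂^4 + (-1)*a₂*b₁^4 + (-8)*a₁*b₁^3*b₂)
      ((-2)*b₂^5 + (-2)*b₁^4*b₂)) ?_ (Filter.EventuallyEq.refl _ _)
    filter_upwards [hmem] with r hr
    symm
    rw [hdv, hddv]
    beta_reduce
    have hr' : r ≠ 0 := ne_of_gt hr
    rw [show 2 * ((a₁ ^ 2 + a₂ ^ 2) * r ^ 3 + (4 / 5 * a₁ ^ 3 + 4 / 5 * a₂ ^ 3) * r ^ 5) / r
        = 2 * ((a₁ ^ 2 + a₂ ^ 2) * r ^ 2 + (4 / 5 * a₁ ^ 3 + 4 / 5 * a₂ ^ 3) * r ^ 4) from by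
      rw [div_eq_iff hr']; ring]
    rw [show ((1 - (1 + a₁ * r ^ 2 + b₁ * r ^ 4) ^ 2) ^ 2 + (1 - (1 + a₂ * r ^ 2 + b₂ * r ^ 4) ^ 2) ^ 2) / (2 * r)
        = r^3 * (((2)*a₂^2 + (2)*a₁^2) + ((4)*a₂*b₂ + (2)*a₂^3 + (4)*a₁*b₁ + (2)*a₁^3) * r^2 + ((2)*b₂^2 + (2)*b₁^2 + (6)*a₂^2*b₂ + (1/2)*a₂^4 + (6)*a₁^2*b₁ + (1/2)*a₁^4) * r^4 + ((6)*a₂*b₂^2 + (2)*a₂^3*b₂ + (6)*a₁*b₁^2 + (2)*a₁^3*b₁) * r^6 + ((2)*b₂^3 + (2)*b₁^3 + (3)*a₂^2*b₂^2 + (3)*a₁^2*b₁^2) * r^8 + ((2)*a₂*b₂^3 + (2)*a₁*b₁^3) * r^10 + ((1/2)*b₂^4 + (1/2)*b₁^4) * r^12) from by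
      rw [div_eq_iff (by simp [hr'] : (2:ℝ) * r ≠ 0)]; ring]
    have hC : ((10)*b₂ + (-3)*a₂^2 + (-4)*a₂^3 + (-4)*a₁^2*a₂) = 0 := by simp only [hb₁, hb₂]; ring
    linear_combination r ^ 4 * hC
  · refine IsBigO.congr' (aux_res_bigO ((-9)*b₂^2 + (-9)*b₁^2 + (-3)*a₂^2*b₂ + (16)*a₂^3*b₂ + (-1/4)*a₂^4 + (16/5)*a₂^5 + (16)*a₁*a₂^2*b₁ + (-3)*a₁^2*b₁ + (16)*a₁^2*a₂*b₂ + (16/5)*a₁^2*a₂^3 + (16)*a₁^3*b₁ + (16/5)*a₁^3*a₂^2 + (-1/4)*a₁^4 + (16/5)*a₁^5)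
      ((-3)*a₂*b₂^2 + (16)*a₂^2*b₂^2 + (16)*a₂^2*b₁^2 + (-1)*a₂^3*b₂ + (64/5)*a₂^4*b₂ + (-3)*a₁*b₁^2 + (64/5)*a₁*a₂^3*b₁ + (16)*a₁^2*b₂^2 + (16)*a₁^2*b₁^2 + (-1)*a₁^3*b₁ + (64/5)*a₁^3*a₂*b₂ + (64/5)*a₁^4*b₁)
      ((-1)*b₂^3 + (-1)*b₁^3 + (-3/2)*a₂^2*b₂^2 + (64/5)*a₂^3*b₂^2 + (64/5)*a₂^3*b₁^2 + (-3/2)*a₁^2*b₁^2 + (64/5)*a₁^3*b₂^2 + (64/5)*a₁^3*b₁^2)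
      ((-1)*a₂*b₂^3 + (-1)*a₁*b₁^3)
      ((-1/4)*b₂^4 + (-1/4)*b₁^4)
      (0)
      (0)) ?_ (Filter.EventuallyEq.refl _ _)
    filter_upwards [hmem] with r hr
    symm
    rw [hdu, hdv, hdm]
    beta_reduce
    have hr' : r ≠ 0 := ne_of_gt hr
    rw [show 2 * ((a₁ ^ 2 + a₂ ^ 2) * r ^ 3 + (4 / 5 * a₁ ^ 3 + 4 / 5 * a₂ ^ 3) * r ^ 5) / r
        = 2 * ((a₁ ^ 2 + a₂ ^ 2) * r ^ 2 + (4 / 5 * a₁ ^ 3 + 4 / 5 * a₂ ^ 3) * r ^ 4) from by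
      rw [div_eq_iff hr']; ring]
    rw [show ((1 - (1 + a₁ * r ^ 2 + b₁ * r ^ 4) ^ 2) ^ 2 + (1 - (1 + a₂ * r ^ 2 + b₂ * r ^ 4) ^ 2) ^ 2) / (4 * r ^ 2)
        = r^2 * (((1)*a₂^2 + (1)*a₁^2) + ((2)*a₂*b₂ + (1)*a₂^3 + (2)*a₁*b₁ + (1)*a₁^3) * r^2 + ((1)*b₂^2 + (1)*b₁^2 + (3)*a₂^2*b₂ + (1/4)*a₂^4 + (3)*a₁^2*b₁ + (1/4)*a₁^4) * r^4 + ((3)*a₂*b₂^2 + (1)*a₂^3*b₂ + (3)*a₁*b₁^2 + (1)*a₁^3*b₁) * r^6 + ((1)*b₂^3 + (1)*b₁^3 + (3/2)*a₂^2*b₂^2 + (3/2)*a₁^2*b₁^2) * r^8 + ((1)*a₂*b₂^3 + (1)*a₁*b₁^3) * r^10 + ((1/4)*b₂^4 + (1/4)*b₁^4) * r^12) from by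
      rw [div_eq_iff (by simp [hr'] : (4:ℝ) * r ^ 2 ≠ 0)]; ring]
    have hC : ((-10)*a₂*b₂ + (3)*a₂^3 + (4)*a₂^4 + (-10)*a₁*b₁ + (8)*a₁^2*a₂^2 + (3)*a₁^3 + (4)*a₁^4) = 0 := by simp only [hb₁, hb₂]; ring
    linear_combination r ^ 4 * hC
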